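/- Let H be an infinite-dimensional separable complex Hilbert space and let T be a bounded normal operator on H with P(T) = H. Then: (a) there exists an orthonormal basis {u_n}_{n∈ℕ} of H and complex numbers c_n with T(u_n) = c_n u_n for all n; (b) σ(T) = {c_n : n ∈ ℕ} is a finite subset of G; (c) T is unitary; and (d) there exists a positive integer N (namely the least common multiple of the orders of the c_n) such that T^N = I. -/

import Mathlib

open Polynomial

section Aux

variable {H : Type*} [NormedAddCommGroup H] [InnerProductSpace ℂ H] [CompleteSpace H]

private lemma aux_exists_pow (T : H →L[ℂ] H)
    (hP : {x : H | ∃ m : ℕ, 0 < m ∧ (T ^ m) x = x} = Set.univ) :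
    ∃ N : ℕ, 0 < N ∧ T ^ N = 1 := by
  have hcl : ∀ m : ℕ, IsClosed ((LinearMap.ker (((T ^ (m + 1) - 1 : H →L[ℂ] H) : H →ₗ[ℂ] H)) : Submodule ℂ H) : Set H) :=
    fun m => ContinuousLinearMap.isClosed_ker _
  have hcov : ⋃ m : ℕ, ((LinearMap.ker (((T ^ (m + 1) - 1 : H →L[ℂ] H) : H →ₗ[ℂ] H)) : Submodule ℂ H) : Set H) = Set.univ := by
    ext x
    simp only [Set.mem_iUnion, SetLike.mem_coe, LinearMap.mem_ker, Set.mem_univ, iff_true]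
    have hx : x ∈ {x : H | ∃ m : ℕ, 0 < m ∧ (T ^ m) x = x} := hP ▸ Set.mem_univ x
    obtain ⟨m, hm, hmx⟩ := hx
    obtain ⟨k, rfl⟩ := Nat.exists_eq_add_of_lt hm
    refine ⟨k, ?_⟩
    have : (T ^ (k + 1) - 1) x = (T ^ (k + 1)) x - x := by
      simp [ContinuousLinearMap.sub_apply]
    rw [ContinuousLinearMap.coe_coe, this]
    simp only [zero_add] at hmx
    rw [hmx, sub_self]
  obtain ⟨m, hm⟩ := nonempty_interior_of_iUnion_of_closed hcl hcov
  have := Submodule.eq_top_of_nonempty_interior' _ hm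
  refine ⟨m + 1, Nat.succ_pos m, ?_⟩
  ext x
  have hx : x ∈ LinearMap.ker (((T ^ (m + 1) - 1 : H →L[ℂ] H) : H →ₗ[ℂ] H)) := this ▸ Submodule.mem_top
  have := LinearMap.mem_ker.mp hx
  simpa [ContinuousLinearMap.sub_apply, sub_eq_zero] using (show (T ^ (m + 1) - 1) x = 0 from this)

private lemma aux_star_eq_pow (T : H →L[ℂ] H) (hT : IsStarNormal T) {N : ℕ} (hN : 0 < N)
    (hspec : ∀ z ∈ spectrum ℂ T, z ^ N = 1) : star T = T ^ (N - 1) := by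
  rw [← cfc_star_id T (R := ℂ), ← cfc_pow_id (R := ℂ) T (N - 1)]
  refine cfc_congr fun z hz => ?_
  have hzN := hspec z hz
  have hz0 : z ≠ 0 := by
    intro h; rw [h, zero_pow hN.ne'] at hzN; exact zero_ne_one hzN
  have hnorm : Complex.normSq z = 1 := by
    have h1 : Complex.normSq z ^ N = 1 := by
      rw [← map_pow, hzN]; simp
    exact (pow_left_inj₀ (Complex.normSq_nonneg z) zero_le_one hN.ne').mp (by simpa using h1)
  have key : (starRingEnd ℂ) z * z = z ^ (N - 1) * z := by
    rw [← Complex.normSq_eq_conj_mul_self, hnorm, ← pow_succ, Nat.sub_add_cancel hN, hzN]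
    simp
  exact mul_right_cancel₀ hz0 key

private lemma aux_unit_mem (T : H →L[ℂ] H) {N : ℕ} (hN : 0 < N) (hTN : T ^ N = 1)
    (hstar : star T = T ^ (N - 1)) : T ∈ unitary (H →L[ℂ] H) := by
  constructor
  · rw [hstar, ← pow_succ, Nat.sub_add_cancel hN, hTN]
  · rw [hstar, ← pow_succ', Nat.sub_add_cancel hN, hTN]

private lemma aux_lag_key {N : ℕ} (hN : 0 < N) {ζ : ℂ} (hζ : ζ ∈ nthRootsFinset N (1 : ℂ)) :
    (X - C ζ) * Lagrange.basis (nthRootsFinset N (1 : ℂ)) id ζ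
      = C (∏ η ∈ (nthRootsFinset N (1 : ℂ)).erase ζ, (ζ - η)⁻¹) * (X ^ N - 1) := by
  have hprod : ∏ η ∈ nthRootsFinset N (1 : ℂ), (X - C η) = X ^ N - 1 :=
    (X_pow_sub_one_eq_prod hN (Complex.isPrimitiveRoot_exp N hN.ne')).symm
  rw [Lagrange.basis]
  simp only [Lagrange.basisDivisor, id]
  rw [Finset.prod_mul_distrib, ← map_prod]
  rw [mul_left_comm, Finset.mul_prod_erase _ (fun x => X - C x) hζ, hprod]

omit [CompleteSpace H] in
private lemma aux_op_facts (T : H →L[ℂ] H) {N : ℕ} (hN : 0 < N) (hTN : T ^ N = 1) :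
    (∑ ζ ∈ nthRootsFinset N (1 : ℂ), aeval T (Lagrange.basis (nthRootsFinset N (1 : ℂ)) id ζ) = 1) ∧
    (∀ ζ ∈ nthRootsFinset N (1 : ℂ),
      (T - ζ • 1) * aeval T (Lagrange.basis (nthRootsFinset N (1 : ℂ)) id ζ) = 0 ∧
      aeval T (Lagrange.basis (nthRootsFinset N (1 : ℂ)) id ζ) * (T - ζ • 1) = 0) := by
  have hone : (1 : ℂ) ∈ nthRootsFinset N (1 : ℂ) := by
    rw [mem_nthRootsFinset hN, one_pow]
  constructor
  · rw [← map_sum, Lagrange.sum_basis Function.injective_id.injOn ⟨1, hone⟩, map_one]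
  · intro ζ hζ
    have key := congrArg (aeval T) (aux_lag_key hN hζ)
    rw [map_mul, map_mul, map_sub, map_sub, aeval_X, aeval_C, map_pow, aeval_X, map_one,
      hTN, sub_self, mul_zero, Algebra.algebraMap_eq_smul_one] at key
    refine ⟨key, ?_⟩
    have key2 := congrArg (aeval T) (aux_lag_key hN hζ)
    rw [mul_comm (X - C ζ)] at key2
    rw [map_mul, map_mul, map_sub, map_sub, aeval_X, aeval_C, map_pow, aeval_X, map_one,
      hTN, sub_self, mul_zero, Algebra.algebraMap_eq_smul_one] at key2
    exact key2

open ContinuousLinearMap in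
private lemma aux_eig_orth (T : H →L[ℂ] H) (hu : star T * T = 1) {ζ η : ℂ} {N : ℕ} (hN : 0 < N)
    (hζ : ζ ^ N = 1) (hne : ζ ≠ η) {x y : H}
    (hx : T x = ζ • x) (hy : T y = η • y) : inner (𝕜 := ℂ) x y = 0 := by
  have hpres : inner (𝕜 := ℂ) x y = inner (𝕜 := ℂ) (T x) (T y) := by
    rw [← adjoint_inner_right, ← star_eq_adjoint, ← comp_apply, ← mul_def, hu, ContinuousLinearMap.one_apply]
  rw [hx, hy, inner_smul_left, inner_smul_right, ← mul_assoc] at hpres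
  by_contra hxy
  have h1 : (starRingEnd ℂ) ζ * η = 1 :=
    mul_right_cancel₀ hxy (hpres.symm.trans (one_mul _).symm)
  have hζ0 : ζ ≠ 0 := fun h => by simp [h, zero_pow hN.ne'] at hζ
  have hnormζ : (starRingEnd ℂ) ζ * ζ = 1 := by
    have ha : Complex.normSq ζ ^ N = 1 := by rw [← map_pow, hζ]; simp
    have hb := (pow_left_inj₀ (Complex.normSq_nonneg ζ) zero_le_one hN.ne').mp
      (by simpa using ha)
    rw [← Complex.normSq_eq_conj_mul_self, hb, Complex.ofReal_one]
  exact hne (mul_left_cancel₀ (fun h => by simp [h] at hnormζ) (hnormζ.trans h1.symm))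

private lemma aux_orthonormal_countable {E : Type*} [NormedAddCommGroup E]
    [InnerProductSpace ℂ E] [TopologicalSpace.SeparableSpace E] {ι : Type*} {v : ι → E}
    (hv : Orthonormal ℂ v) : Countable ι := by
  apply Pairwise.countable_of_isOpen_disjoint
    (s := fun i => Metric.ball (v i) (Real.sqrt 2 / 2))
  · intro i j hij
    have hdist : dist (v i) (v j) = Real.sqrt 2 := by
      rw [dist_eq_norm]
      have h2 : ‖v i - v j‖ ^ 2 = 2 := by
        rw [norm_sub_sq (𝕜 := ℂ), hv.1 i, hv.1 j, hv.2 hij]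
        norm_num
      rw [show (2 : ℝ) = ‖v i - v j‖ ^ 2 from h2.symm, Real.sqrt_sq (norm_nonneg _)]
    have : Disjoint (Metric.ball (v i) (Real.sqrt 2 / 2)) (Metric.ball (v j) (Real.sqrt 2 / 2)) := by
      apply Metric.ball_disjoint_ball
      rw [hdist]; linarith
    exact this
  · exact fun i => Metric.isOpen_ball
  · exact fun i => Metric.nonempty_ball.mpr (by positivity)

end Aux

/-- A bounded normal operator `T` on an infinite-dimensional separable complex Hilbert space
all of whose points are periodic is diagonalizable with respect to some orthonormal basis,
its spectrum is a finite set of roots of unity (the set of eigenvalues), `T` is unitary,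
and `T ^ N = 1` for some positive integer `N`. -/
theorem normal_with_all_points_periodic_structure
    {H : Type*} [NormedAddCommGroup H] [InnerProductSpace ℂ H] [CompleteSpace H]
    (e : HilbertBasis ℕ ℂ H)
    (T : H →L[ℂ] H) (hT : IsStarNormal T)
    (hP : {x : H | ∃ m : ℕ, 0 < m ∧ (T ^ m) x = x} = Set.univ) :
    ∃ (u : HilbertBasis ℕ ℂ H) (c : ℕ → ℂ),
      (∀ n, T (u n) = c n • u n) ∧
      spectrum ℂ T = Set.range c ∧
      (Set.range c).Finite ∧
      Set.range c ⊆ {z : ℂ | ∃ k : ℕ, 0 < k ∧ z ^ k = 1} ∧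
      T ∈ unitary (H →L[ℂ] H) ∧
      ∃ N : ℕ, 0 < N ∧ T ^ N = 1 := by
  classical
  have hne0 : e 0 ≠ 0 := e.orthonormal.ne_zero 0
  haveI hntH : Nontrivial H := nontrivial_of_ne (e 0) 0 hne0
  haveI : Nontrivial (H →L[ℂ] H) := ⟨1, 0, fun h => hne0 (by
    simpa using congrArg (fun f : H →L[ℂ] H => f (e 0)) h)⟩
  obtain ⟨N, hN, hTN⟩ := aux_exists_pow T hP
  have hspec : ∀ z ∈ spectrum ℂ T, z ^ N = 1 := by
    intro z hz
    have hmem : z ^ N ∈ spectrum ℂ (T ^ N) := by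
      rw [spectrum.map_pow T N]; exact ⟨z, hz, rfl⟩
    rw [hTN, spectrum.one_eq] at hmem
    exact hmem
  have hstar : star T = T ^ (N - 1) := aux_star_eq_pow T hT hN hspec
  have hunit : T ∈ unitary (H →L[ℂ] H) := aux_unit_mem T hN hTN hstar
  have hstarmul : star T * T = 1 := hunit.1
  haveI hsepH : TopologicalSpace.SeparableSpace H := by
    rw [← TopologicalSpace.isSeparable_univ_iff]
    have h1 : TopologicalSpace.IsSeparable
        ((Submodule.span ℂ (Set.range ⇑e) : Submodule ℂ H) : Set H) :=
      ((Set.countable_range _).isSeparable).span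
    have h2 := h1.closure
    rwa [← Submodule.topologicalClosure_coe, e.dense_span, Submodule.top_coe] at h2
  haveI : SecondCountableTopology H := UniformSpace.secondCountable_of_separable H
  obtain ⟨hPsum, hPker⟩ := aux_op_facts T hN hTN
  set E : ℂ → Submodule ℂ H := fun ζ => LinearMap.ker (((T - ζ • (1 : H →L[ℂ] H) : H →L[ℂ] H) : H →ₗ[ℂ] H)) with hEdef
  have hEmem : ∀ (ζ : ℂ) (x : H), x ∈ E ζ ↔ T x = ζ • x := by
    intro ζ x
    simp [hEdef, LinearMap.mem_ker, ContinuousLinearMap.sub_apply, sub_eq_zero,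
      ContinuousLinearMap.smul_apply, ContinuousLinearMap.one_apply]
  have hEcomplete : ∀ ζ : ℂ, CompleteSpace (E ζ) := fun ζ =>
    (ContinuousLinearMap.isClosed_ker _).completeSpace_coe
  have hbasis : ∀ ζ : ℂ, ∃ (s : Set (E ζ)) (b : HilbertBasis s ℂ (E ζ)),
      ⇑b = ((↑) : s → E ζ) := fun ζ => by
    haveI := hEcomplete ζ
    exact exists_hilbertBasis ℂ (E ζ)
  choose w bas hbas using hbasis
  let ι : Type _ := Σ ζ : {z : ℂ // z ∈ nthRootsFinset N (1 : ℂ)}, w ζ.1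
  let u0 : ι → H := fun i => ((i.2 : E i.1.1) : H)
  have hu0mem : ∀ i : ι, (u0 i) ∈ E i.1.1 := fun i => SetLike.coe_mem _
  have hu0eig : ∀ i : ι, T (u0 i) = (i.1.1 : ℂ) • u0 i := fun i => (hEmem _ _).mp (hu0mem i)
  have horm : Orthonormal ℂ u0 := by
    constructor
    · intro i
      have h1 : ‖bas i.1.1 i.2‖ = 1 := (bas i.1.1).orthonormal.1 i.2
      rw [hbas] at h1
      simpa using h1
    · rintro ⟨⟨ζ, hζ⟩, x⟩ ⟨⟨η, hη⟩, y⟩ hij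
      by_cases hzz : ζ = η
      · subst hzz
        have hxy : x ≠ y := fun h => hij (by cases h; rfl)
        have h2 := (bas ζ).orthonormal.2 hxy
        rw [hbas] at h2
        simpa [Submodule.coe_inner] using h2
      · exact aux_eig_orth T hstarmul hN ((mem_nthRootsFinset hN 1).mp hζ) hzz
          (hu0eig ⟨⟨ζ, hζ⟩, x⟩) (hu0eig ⟨⟨η, hη⟩, y⟩)
  -- density of the span
  have hdense : ⊤ ≤ (Submodule.span ℂ (Set.range u0)).topologicalClosure := by
    have hE_le : ∀ ζ : {z : ℂ // z ∈ nthRootsFinset N (1 : ℂ)},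
        E ζ.1 ≤ (Submodule.span ℂ (Set.range u0)).topologicalClosure := by
      intro ζ v hv
      have hd : (⟨v, hv⟩ : E ζ.1) ∈
          closure ((Submodule.span ℂ (Set.range ⇑(bas ζ.1))) : Set (E ζ.1)) := by
        rw [← Submodule.topologicalClosure_coe, (bas ζ.1).dense_span]; trivial
      have hv' : v ∈ closure (((↑) : E ζ.1 → H) ''
          ((Submodule.span ℂ (Set.range ⇑(bas ζ.1))) : Set (E ζ.1))) :=
        image_closure_subset_closure_image continuous_subtype_val ⟨⟨v, hv⟩, hd, rfl⟩
      have himg : (((↑) : E ζ.1 → H) ''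
          ((Submodule.span ℂ (Set.range ⇑(bas ζ.1))) : Set (E ζ.1)))
          ⊆ ((Submodule.span ℂ (Set.range u0)) : Set H) := by
        have : Submodule.map (E ζ.1).subtype (Submodule.span ℂ (Set.range ⇑(bas ζ.1)))
            ≤ Submodule.span ℂ (Set.range u0) := by
          rw [Submodule.map_span]
          apply Submodule.span_mono
          rintro _ ⟨_, ⟨x, rfl⟩, rfl⟩
          exact ⟨⟨ζ, x⟩, by rw [hbas]; rfl⟩
        intro a ha
        obtain ⟨b, hb, rfl⟩ := ha
        exact this ⟨b, hb, rfl⟩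
      have h3 : v ∈ closure ((Submodule.span ℂ (Set.range u0)) : Set H) :=
        closure_mono himg hv'
      rwa [← Submodule.topologicalClosure_coe, SetLike.mem_coe] at h3
    intro x _
    have hx : x = ∑ ζ ∈ nthRootsFinset N (1 : ℂ),
        (aeval T (Lagrange.basis (nthRootsFinset N (1 : ℂ)) id ζ)) x := by
      conv_lhs => rw [show x = (1 : H →L[ℂ] H) x from rfl, ← hPsum]
      simp [ContinuousLinearMap.sum_apply]
    rw [hx]
    apply Submodule.sum_mem
    intro ζ hζR
    apply hE_le ⟨ζ, hζR⟩
    rw [hEmem]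
    have h0 := congrArg (fun f : H →L[ℂ] H => f x) (hPker ζ hζR).1
    simp only [ContinuousLinearMap.mul_apply, ContinuousLinearMap.sub_apply,
      ContinuousLinearMap.smul_apply, ContinuousLinearMap.one_apply,
      ContinuousLinearMap.zero_apply] at h0
    exact sub_eq_zero.mp h0
  -- countability and infinitude of the index
  haveI hcount : Countable ι := by
    haveI : ∀ ζ : {z : ℂ // z ∈ nthRootsFinset N (1 : ℂ)}, Countable (w ζ.1) := by
      intro ζ
      haveI := hEcomplete ζ.1
      exact aux_orthonormal_countable (bas ζ.1).orthonormal
    exact inferInstance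
  haveI hinf : Infinite ι := by
    rw [← not_finite_iff_infinite]
    intro hfin
    have hfin2 : (Set.range u0).Finite := Set.finite_range u0
    haveI : FiniteDimensional ℂ (Submodule.span ℂ (Set.range u0)) :=
      FiniteDimensional.span_of_finite ℂ hfin2
    have hclosed : IsClosed ((Submodule.span ℂ (Set.range u0)) : Set H) :=
      Submodule.closed_of_finiteDimensional _
    have htop : Submodule.span ℂ (Set.range u0) = ⊤ := by
      have h4 := hdense
      rw [hclosed.submodule_topologicalClosure_eq] at h4
      exact le_antisymm le_top h4
    haveI : FiniteDimensional ℂ H :=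
      Module.finite_def.mpr ⟨hfin2.toFinset, by rw [Set.Finite.coe_toFinset]; exact htop⟩
    have := e.orthonormal.linearIndependent.finrank_eq_zero_of_infinite
    have hpos : 0 < Module.finrank ℂ H := Module.finrank_pos
    omega
  obtain ⟨den⟩ := nonempty_denumerable ι
  haveI := den
  let g : ι ≃ ℕ := Denumerable.eqv ι
  let v : ℕ → H := u0 ∘ g.symm
  have hormv : Orthonormal ℂ v := horm.comp _ g.symm.injective
  have hrangev : Set.range v = Set.range u0 := g.symm.surjective.range_comp u0
  have hdensev : ⊤ ≤ (Submodule.span ℂ (Set.range v)).topologicalClosure := by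
    rw [hrangev]; exact hdense
  set c : ℕ → ℂ := fun n => ((g.symm n).1.1 : ℂ) with hcdef
  have hrangec : Set.range c = Set.range (fun i : ι => (i.1.1 : ℂ)) := by
    rw [hcdef]
    exact g.symm.surjective.range_comp (fun i : ι => (i.1.1 : ℂ))
  refine ⟨HilbertBasis.mk hormv hdensev, c, ?_, ?_, ?_, ?_, hunit, N, hN, hTN⟩
  · intro n
    rw [HilbertBasis.coe_mk]
    exact hu0eig (g.symm n)
  · -- spectrum = range c
    apply le_antisymm
    · intro z hz
      rw [hrangec]
      by_contra hzc
      have hzR : z ∈ nthRootsFinset N (1 : ℂ) := (mem_nthRootsFinset hN 1).mpr (hspec z hz)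
      have hwempty : IsEmpty (w z) := by
        by_contra hne
        rw [not_isEmpty_iff] at hne
        obtain ⟨x⟩ := hne
        exact hzc ⟨⟨⟨z, hzR⟩, x⟩, rfl⟩
      have hEbot : ∀ a : H, a ∈ E z → a = 0 := by
        intro a ha
        have hd : (⟨a, ha⟩ : E z) ∈
            closure ((Submodule.span ℂ (Set.range ⇑(bas z))) : Set (E z)) := by
          rw [← Submodule.topologicalClosure_coe, (bas z).dense_span]; trivial
        rw [Set.range_eq_empty, Submodule.span_empty, Submodule.bot_coe,
          closure_singleton, Set.mem_singleton_iff] at hd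
        exact congrArg Subtype.val hd
      have hPz : aeval T (Lagrange.basis (nthRootsFinset N (1 : ℂ)) id z) = 0 := by
        ext a
        have h0 := congrArg (fun f : H →L[ℂ] H => f a) (hPker z hzR).1
        simp only [ContinuousLinearMap.mul_apply, ContinuousLinearMap.sub_apply,
          ContinuousLinearMap.smul_apply, ContinuousLinearMap.one_apply,
          ContinuousLinearMap.zero_apply] at h0
        have : (aeval T (Lagrange.basis (nthRootsFinset N (1 : ℂ)) id z)) a ∈ E z := by
          rw [hEmem]
          exact sub_eq_zero.mp h0
        simpa using hEbot _ this
      -- construct the inverse of T - z•1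
      set S : H →L[ℂ] H := ∑ ζ ∈ (nthRootsFinset N (1 : ℂ)).erase z,
        (ζ - z)⁻¹ • aeval T (Lagrange.basis (nthRootsFinset N (1 : ℂ)) id ζ) with hSdef
      have hkey : ∀ ζ ∈ (nthRootsFinset N (1 : ℂ)).erase z,
          (T - z • 1) * ((ζ - z)⁻¹ • aeval T (Lagrange.basis (nthRootsFinset N (1 : ℂ)) id ζ))
          = aeval T (Lagrange.basis (nthRootsFinset N (1 : ℂ)) id ζ) := by
        intro ζ hζ
        have hζR := Finset.mem_of_mem_erase hζ
        have hζz : ζ ≠ z := Finset.ne_of_mem_erase hζ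
        have hsplit : (T - z • 1) = (T - ζ • 1) + (ζ - z) • 1 := by
          rw [sub_smul]; abel
        rw [mul_smul_comm, hsplit, add_mul, (hPker ζ hζR).1, zero_add, smul_mul_assoc,
          one_mul, smul_smul, inv_mul_cancel₀ (sub_ne_zero.mpr hζz), one_smul]
      have hS1 : (T - z • 1) * S = 1 := by
        rw [hSdef, Finset.mul_sum]
        rw [Finset.sum_congr rfl hkey]
        rw [Finset.sum_erase_eq_sub hzR, hPsum, hPz, sub_zero]
      have hkey2 : ∀ ζ ∈ (nthRootsFinset N (1 : ℂ)).erase z,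
          ((ζ - z)⁻¹ • aeval T (Lagrange.basis (nthRootsFinset N (1 : ℂ)) id ζ)) * (T - z • 1)
          = aeval T (Lagrange.basis (nthRootsFinset N (1 : ℂ)) id ζ) := by
        intro ζ hζ
        have hζR := Finset.mem_of_mem_erase hζ
        have hζz : ζ ≠ z := Finset.ne_of_mem_erase hζ
        have hsplit : (T - z • 1) = (T - ζ • 1) + (ζ - z) • 1 := by
          rw [sub_smul]; abel
        rw [smul_mul_assoc, hsplit, mul_add, (hPker ζ hζR).2, zero_add, mul_smul_comm,
          mul_one, smul_smul, inv_mul_cancel₀ (sub_ne_zero.mpr hζz), one_smul]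
      have hS2 : S * (T - z • 1) = 1 := by
        rw [hSdef, Finset.sum_mul]
        rw [Finset.sum_congr rfl hkey2]
        rw [Finset.sum_erase_eq_sub hzR, hPsum, hPz, sub_zero]
      have hUnit : IsUnit ((algebraMap ℂ (H →L[ℂ] H)) z - T) := by
        refine ⟨⟨(algebraMap ℂ (H →L[ℂ] H)) z - T, -S, ?_, ?_⟩, rfl⟩
        · rw [Algebra.algebraMap_eq_smul_one]
          calc (z • (1 : H →L[ℂ] H) - T) * -S = (T - z • 1) * S := by
                rw [mul_neg, ← neg_mul, neg_sub]
          _ = 1 := hS1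
        · rw [Algebra.algebraMap_eq_smul_one]
          calc -S * (z • (1 : H →L[ℂ] H) - T) = S * (T - z • 1) := by
                rw [neg_mul, ← mul_neg, neg_sub]
          _ = 1 := hS2
      exact (spectrum.mem_iff.mp hz) hUnit
    · rw [hrangec]
      rintro _ ⟨i, rfl⟩
      rw [spectrum.mem_iff]
      intro hUnit
      obtain ⟨U, hU⟩ := hUnit
      have h0 : ((algebraMap ℂ (H →L[ℂ] H)) (i.1.1 : ℂ) - T) (u0 i) = 0 := by
        rw [Algebra.algebraMap_eq_smul_one]
        simp only [ContinuousLinearMap.sub_apply, ContinuousLinearMap.smul_apply,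
          ContinuousLinearMap.one_apply]
        rw [hu0eig i, sub_self]
      have h1 : u0 i = 0 := by
        have h2 := congrArg (fun f : H →L[ℂ] H => f (u0 i)) U.inv_mul
        simp only [ContinuousLinearMap.mul_apply, ContinuousLinearMap.one_apply] at h2
        rw [hU] at h2
        rw [h0] at h2
        simpa using h2.symm
      exact horm.ne_zero i h1
  · apply Set.Finite.subset (nthRootsFinset N (1 : ℂ)).finite_toSet
    rintro _ ⟨n, rfl⟩
    exact (g.symm n).1.2
  · rintro _ ⟨n, rfl⟩
    exact ⟨N, hN, (mem_nthRootsFinset hN 1).mp (g.symm n).1.2⟩
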